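/- Let σ_G > 0 and σ_L > 0, let f_G(t) = (1/(√(2π)σ_G)) exp(−t²/(2σ_G²)) be the zero-mean Gaussian density and f_L(t) = (1/(2σ_L)) exp(−|t|/σ_L) the zero-mean Laplacian density, and define erfc(x) = (2/√π) ∫ₓ^∞ e^{−t²} dt. Then for every ε ∈ ℝ, the convolution satisfies ∫_ℝ f_L(t) · f_G(ε − t) dt = (1/(4σ_L)) · exp(σ_G²/(2σ_L²)) · [ exp(−ε/σ_L) · erfc(σ_G/(√2·σ_L) − ε/(√2·σ_G)) + exp(ε/σ_L) · erfc(σ_G/(√2·σ_L) + ε/(√2·σ_G)) ]. -/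

import Mathlib

open MeasureTheory

/-- The complementary error function `erfc(x) = (2/√π) ∫ₓ^∞ e^{−t²} dt`. -/
noncomputable def erfc (x : ℝ) : ℝ :=
  (2 / Real.sqrt Real.pi) * ∫ t in Set.Ioi x, Real.exp (-t ^ 2)

/-- The zero-mean Gaussian density with standard deviation `σ_G`. -/
noncomputable def gaussianDensity (σG : ℝ) (t : ℝ) : ℝ :=
  (1 / (Real.sqrt (2 * Real.pi) * σG)) * Real.exp (-t ^ 2 / (2 * σG ^ 2))

/-- The zero-mean Laplacian density with scale `σ_L`. -/
noncomputable def laplacianDensity (σL : ℝ) (t : ℝ) : ℝ :=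
  (1 / (2 * σL)) * Real.exp (-|t| / σL)

open Set in
lemma shift_Ioi (f : ℝ → ℝ) (a d : ℝ) :
    (∫ x in Ioi a, f (x + d)) = ∫ x in Ioi (a + d), f x := by
  have A : MeasurableEmbedding fun x : ℝ => x + d :=
    (Homeomorph.addRight d).isClosedEmbedding.measurableEmbedding
  have h := A.setIntegral_map (μ := volume) f (Ioi (a + d))
  rw [map_add_right_eq_self (volume : Measure ℝ) d] at h
  have hs : (fun x : ℝ => x + d) ⁻¹' Ioi (a + d) = Ioi a := by
    ext x; simp [Set.mem_preimage, Set.mem_Ioi]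
  rw [h, hs]

open Set in
/-- Half-line Gaussian integral in terms of `erfc`. -/
lemma gauss_Ioi {σG : ℝ} (hσG : 0 < σG) (a : ℝ) :
    (∫ t in Ioi (0:ℝ), Real.exp (-(t - a) ^ 2 / (2 * σG ^ 2))) =
      Real.sqrt 2 * σG * (Real.sqrt Real.pi / 2) * erfc (-a / (Real.sqrt 2 * σG)) := by
  have h2 : (0:ℝ) < Real.sqrt 2 := by positivity
  have hk : (0:ℝ) < (Real.sqrt 2 * σG)⁻¹ := by positivity
  have hπ : (0:ℝ) < Real.sqrt Real.pi := Real.sqrt_pos.mpr Real.pi_pos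
  set k : ℝ := (Real.sqrt 2 * σG)⁻¹ with hkdef
  have step1 : (∫ t in Ioi (0:ℝ), Real.exp (-(t - a) ^ 2 / (2 * σG ^ 2))) =
      ∫ u in Ioi (-a), Real.exp (-(u * k) ^ 2) := by
    rw [show (-a : ℝ) = 0 + (-a) by ring,
      ← shift_Ioi (fun u => Real.exp (-(u * k) ^ 2)) 0 (-a)]
    refine setIntegral_congr_fun measurableSet_Ioi fun t _ => ?_
    congr 1
    have hs2 : (Real.sqrt 2) ^ 2 = 2 := Real.sq_sqrt (by norm_num)
    field_simp [hkdef]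
    rw [hkdef, inv_pow, mul_pow, hs2]
    field_simp
    ring
  have step2 : (∫ u in Ioi (-a : ℝ), Real.exp (-(u * k) ^ 2)) =
      k⁻¹ • ∫ v in Ioi (-a * k), Real.exp (-v ^ 2) :=
    integral_comp_mul_right_Ioi (fun v => Real.exp (-v ^ 2)) (-a) hk
  rw [step1, step2, smul_eq_mul]
  have herfc : (∫ v in Ioi (-a * k), Real.exp (-v ^ 2)) =
      Real.sqrt Real.pi / 2 * erfc (-a * k) := by
    rw [erfc]; field_simp
  rw [herfc, hkdef, inv_inv]
  have : -a * (Real.sqrt 2 * σG)⁻¹ = -a / (Real.sqrt 2 * σG) := by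
    rw [div_eq_mul_inv]
  rw [this]; ring

open Set in
lemma gauss_Iic {σG : ℝ} (hσG : 0 < σG) (a : ℝ) :
    (∫ t in Iic (0:ℝ), Real.exp (-(t - a) ^ 2 / (2 * σG ^ 2))) =
      Real.sqrt 2 * σG * (Real.sqrt Real.pi / 2) * erfc (a / (Real.sqrt 2 * σG)) := by
  have h := integral_comp_neg_Iic (0:ℝ) (fun u => Real.exp (-(u - (-a)) ^ 2 / (2 * σG ^ 2)))
  rw [neg_zero] at h
  have heq : (∫ t in Iic (0:ℝ), Real.exp (-(t - a) ^ 2 / (2 * σG ^ 2))) =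
      ∫ t in Iic (0:ℝ), Real.exp (-(-t - (-a)) ^ 2 / (2 * σG ^ 2)) := by
    refine setIntegral_congr_fun measurableSet_Iic fun t _ => ?_
    congr 1
    ring
  rw [heq, h, gauss_Ioi hσG (-a), neg_neg]

/-- Closed form for the Gaussian–Laplacian convolution density:
`(f_L ∗ f_G)(ε) = (1/(4σ_L)) e^{σ_G²/(2σ_L²)} [ e^{−ε/σ_L} erfc(σ_G/(√2σ_L) − ε/(√2σ_G))
+ e^{ε/σ_L} erfc(σ_G/(√2σ_L) + ε/(√2σ_G)) ]`. -/
theorem gaussian_laplacian_convolution (σG σL : ℝ) (hσG : 0 < σG) (hσL : 0 < σL) (ε : ℝ) :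
    (∫ t : ℝ, laplacianDensity σL t * gaussianDensity σG (ε - t)) =
      (1 / (4 * σL)) * Real.exp (σG ^ 2 / (2 * σL ^ 2)) *
        (Real.exp (-ε / σL) *
            erfc (σG / (Real.sqrt 2 * σL) - ε / (Real.sqrt 2 * σG)) +
          Real.exp (ε / σL) *
            erfc (σG / (Real.sqrt 2 * σL) + ε / (Real.sqrt 2 * σG))) := by
  have hσG' : σG ≠ 0 := hσG.ne'
  have hσL' : σL ≠ 0 := hσL.ne'
  have hb : (0:ℝ) < 1 / (2 * σG ^ 2) := by positivity
  set c : ℝ := (1 / (2 * σL)) * (1 / (Real.sqrt (2 * Real.pi) * σG)) with hc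
  set aP : ℝ := ε - σG ^ 2 / σL with haP
  set aM : ℝ := ε + σG ^ 2 / σL with haM
  set CP : ℝ := c * Real.exp (σG ^ 2 / (2 * σL ^ 2) + -ε / σL) with hCP
  set CM : ℝ := c * Real.exp (σG ^ 2 / (2 * σL ^ 2) + ε / σL) with hCM
  set F : ℝ → ℝ := fun t => laplacianDensity σL t * gaussianDensity σG (ε - t) with hF
  -- pointwise identities
  have hplus : ∀ t : ℝ, 0 ≤ t →
      F t = CP * Real.exp (-(t - aP) ^ 2 / (2 * σG ^ 2)) := by
    intro t ht
    simp only [hF, laplacianDensity, gaussianDensity]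
    rw [abs_of_nonneg ht, hCP, hc, haP, mul_mul_mul_comm]
    have key : Real.exp (-t / σL) * Real.exp (-(ε - t) ^ 2 / (2 * σG ^ 2)) =
        Real.exp (σG ^ 2 / (2 * σL ^ 2) + -ε / σL) *
          Real.exp (-(t - (ε - σG ^ 2 / σL)) ^ 2 / (2 * σG ^ 2)) := by
      rw [← Real.exp_add, ← Real.exp_add]
      congr 1
      field_simp
      ring
    rw [key]
    ring
  have hminus : ∀ t : ℝ, t ≤ 0 →
      F t = CM * Real.exp (-(t - aM) ^ 2 / (2 * σG ^ 2)) := by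
    intro t ht
    simp only [hF, laplacianDensity, gaussianDensity]
    rw [abs_of_nonpos ht, hCM, hc, haM, mul_mul_mul_comm]
    have key : Real.exp (-(-t) / σL) * Real.exp (-(ε - t) ^ 2 / (2 * σG ^ 2)) =
        Real.exp (σG ^ 2 / (2 * σL ^ 2) + ε / σL) *
          Real.exp (-(t - (ε + σG ^ 2 / σL)) ^ 2 / (2 * σG ^ 2)) := by
      rw [← Real.exp_add, ← Real.exp_add]
      congr 1
      field_simp
      ring
    rw [key]
    ring
  -- integrable model functions
  have hint : ∀ a C : ℝ, Integrable (fun t : ℝ => C * Real.exp (-(t - a) ^ 2 / (2 * σG ^ 2))) := by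
    intro a C
    have h1 : Integrable (fun x : ℝ => Real.exp (-(1 / (2 * σG ^ 2)) * x ^ 2)) :=
      integrable_exp_neg_mul_sq hb
    have h2 := (h1.comp_sub_right a).const_mul C
    refine h2.congr ?_
    filter_upwards with x
    congr 2
    field_simp
  have hIP : IntegrableOn F (Set.Ioi (0:ℝ)) := by
    refine ((hint aP CP).integrableOn).congr_fun ?_ measurableSet_Ioi
    intro t ht
    exact (hplus t (le_of_lt ht)).symm
  have hIM : IntegrableOn F (Set.Iic (0:ℝ)) := by
    refine ((hint aM CM).integrableOn).congr_fun ?_ measurableSet_Iic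
    intro t ht
    exact (hminus t ht).symm
  have hsplit : (∫ t : ℝ, F t) = (∫ t in Set.Iic (0:ℝ), F t) + ∫ t in Set.Ioi (0:ℝ), F t :=
    (intervalIntegral.integral_Iic_add_Ioi hIM hIP).symm
  have hplusint : (∫ t in Set.Ioi (0:ℝ), F t) =
      CP * (Real.sqrt 2 * σG * (Real.sqrt Real.pi / 2) *
        erfc (-aP / (Real.sqrt 2 * σG))) := by
    rw [setIntegral_congr_fun measurableSet_Ioi (fun t ht => hplus t (le_of_lt ht)),
      MeasureTheory.integral_const_mul, gauss_Ioi hσG]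
  have hminusint : (∫ t in Set.Iic (0:ℝ), F t) =
      CM * (Real.sqrt 2 * σG * (Real.sqrt Real.pi / 2) *
        erfc (aM / (Real.sqrt 2 * σG))) := by
    rw [setIntegral_congr_fun measurableSet_Iic (fun t ht => hminus t ht),
      MeasureTheory.integral_const_mul, gauss_Iic hσG]
  rw [show (∫ t : ℝ, laplacianDensity σL t * gaussianDensity σG (ε - t)) = ∫ t : ℝ, F t from rfl,
    hsplit, hplusint, hminusint]
  -- now pure algebra
  have hargP : -aP / (Real.sqrt 2 * σG) =
      σG / (Real.sqrt 2 * σL) - ε / (Real.sqrt 2 * σG) := by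
    have h2 : (0:ℝ) < Real.sqrt 2 := by positivity
    rw [haP]
    field_simp
    ring
  have hargM : aM / (Real.sqrt 2 * σG) =
      σG / (Real.sqrt 2 * σL) + ε / (Real.sqrt 2 * σG) := by
    have h2 : (0:ℝ) < Real.sqrt 2 := by positivity
    rw [haM]
    field_simp
    ring
  rw [hargP, hargM, hCP, hCM, hc]
  have hsqrt : Real.sqrt (2 * Real.pi) = Real.sqrt 2 * Real.sqrt Real.pi :=
    Real.sqrt_mul (by norm_num) _
  have h2 : (0:ℝ) < Real.sqrt 2 := by positivity
  have hπ : (0:ℝ) < Real.sqrt Real.pi := Real.sqrt_pos.mpr Real.pi_pos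
  rw [hsqrt, Real.exp_add, Real.exp_add]
  field_simp
  ring
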